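/- If A is an irreducible real n×n matrix with nonnegative off-diagonal entries, then the spectral bound s(A) is an eigenvalue of A of algebraic multiplicity one, and every other eigenvalue λ of A satisfies Re λ < s(A). -/

import Mathlib

open Matrix

/-- A matrix is irreducible if there is no nontrivial subset `S` of indices with
`A i j = 0` for all `i ∈ S`, `j ∉ S`. -/
def MatIrreducible {n : ℕ} (A : Matrix (Fin n) (Fin n) ℝ) : Prop :=
  ¬ ∃ S : Set (Fin n), S.Nonempty ∧ Sᶜ.Nonempty ∧ ∀ i ∈ S, ∀ j ∉ S, A i j = 0

section PFauxiliary
open Matrix Finset Polynomial Module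
variable {n : ℕ}

noncomputable def msupp (z : Fin n → ℝ) : Finset (Fin n) :=
  Finset.univ.filter (fun i => z i ≠ 0)

lemma PFaux.iter_pos (M : Matrix (Fin n) (Fin n) ℝ) (hM : ∀ i j, 0 ≤ M i j)
    (hirr : ∀ S : Set (Fin n), S.Nonempty → Sᶜ.Nonempty → ∃ j ∈ Sᶜ, ∃ k ∈ S, M j k ≠ 0)
    (y : Fin n → ℝ) (hy : ∀ i, 0 ≤ y i) (hy0 : y ≠ 0) :
    ∀ i, 0 < ((fun z => z + M *ᵥ z)^[n-1] y) i := by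
  set T : (Fin n → ℝ) → (Fin n → ℝ) := fun z => z + M *ᵥ z with hT
  have hmv : ∀ (z : Fin n → ℝ) i, (M *ᵥ z) i = ∑ j, M i j * z j := by
    intro z i; simp [Matrix.mulVec, dotProduct]
  have hTge : ∀ z : Fin n → ℝ, (∀ i, 0 ≤ z i) → ∀ i, z i ≤ T z i := by
    intro z hz i
    have : 0 ≤ (M *ᵥ z) i := by
      rw [hmv]; exact Finset.sum_nonneg fun j _ => mul_nonneg (hM i j) (hz j)
    show z i ≤ z i + (M *ᵥ z) i
    exact le_add_of_nonneg_right this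
  have hTnn : ∀ z : Fin n → ℝ, (∀ i, 0 ≤ z i) → ∀ i, 0 ≤ T z i :=
    fun z hz i => (hz i).trans (hTge z hz i)
  have hiternn : ∀ k, ∀ i, 0 ≤ (T^[k] y) i := by
    intro k
    induction k with
    | zero => simpa using hy
    | succ k ih => rw [Function.iterate_succ_apply']; exact hTnn _ ih
  have hsubset : ∀ k, msupp (T^[k] y) ⊆ msupp (T^[k+1] y) := by
    intro k i hi
    simp only [msupp, mem_filter, mem_univ, true_and] at hi ⊢
    have h1 : 0 < (T^[k] y) i := lt_of_le_of_ne (hiternn k i) (Ne.symm hi)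
    have h2 : (T^[k] y) i ≤ (T^[k+1] y) i := by
      rw [Function.iterate_succ_apply']; exact hTge _ (hiternn k) i
    exact ne_of_gt (h1.trans_le h2)
  have hstrict : ∀ k, msupp (T^[k] y) ≠ Finset.univ →
      msupp (T^[k] y) ≠ ∅ → msupp (T^[k] y) ⊂ msupp (T^[k+1] y) := by
    intro k hne h0
    set z := T^[k] y with hz
    refine Finset.ssubset_iff_of_subset (hsubset k) |>.mpr ?_
    have hSne : (↑(msupp z) : Set (Fin n)).Nonempty := by
      rcases Finset.nonempty_iff_ne_empty.mpr h0 with ⟨i, hi⟩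
      exact ⟨i, by simpa using hi⟩
    have hScne : (↑(msupp z) : Set (Fin n))ᶜ.Nonempty := by
      have : ∃ j, j ∉ msupp z := by
        by_contra hc
        push_neg at hc
        exact hne (Finset.eq_univ_iff_forall.mpr hc)
      rcases this with ⟨j, hj⟩
      exact ⟨j, by simpa using hj⟩
    obtain ⟨j, hj, k', hk', hMjk⟩ := hirr _ hSne hScne
    have hk'' : k' ∈ msupp z := by simpa using hk'
    refine ⟨j, ?_, by simpa [msupp] using hj⟩
    simp only [msupp, mem_filter, mem_univ, true_and]
    have hzk : 0 < z k' := by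
      have : z k' ≠ 0 := by simpa [msupp] using hk''
      exact lt_of_le_of_ne (hiternn k k') (Ne.symm this)
    have hMpos : 0 < M j k' := lt_of_le_of_ne (hM j k') (Ne.symm hMjk)
    have hsum : M j k' * z k' ≤ (M *ᵥ z) j := by
      rw [hmv]
      exact Finset.single_le_sum (f := fun l => M j l * z l)
        (fun l _ => mul_nonneg (hM j l) (hiternn k l)) (mem_univ k')
    have hpos : 0 < (T z) j := by
      have hzj : 0 ≤ z j := hiternn k j
      have : 0 < (M *ᵥ z) j := lt_of_lt_of_le (mul_pos hMpos hzk) hsum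
      show 0 < z j + (M *ᵥ z) j
      exact add_pos_of_nonneg_of_pos hzj this
    rw [Function.iterate_succ_apply', ← hz]
    exact ne_of_gt hpos
  have hcard : ∀ k, msupp (T^[k] y) = Finset.univ ∨ k + 1 ≤ (msupp (T^[k] y)).card := by
    intro k
    induction k with
    | zero =>
      right
      obtain ⟨i, hi⟩ := Function.ne_iff.mp hy0
      exact Finset.card_pos.mpr ⟨i, Finset.mem_filter.mpr ⟨Finset.mem_univ _, hi⟩⟩
    | succ k ih =>
      by_cases hu : msupp (T^[k] y) = Finset.univ
      · left
        have := hsubset k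
        rw [hu] at this
        exact Finset.univ_subset_iff.mp this
      · rcases ih with h | h
        · exact absurd h hu
        · right
          have h0 : msupp (T^[k] y) ≠ ∅ := by
            intro he; rw [he] at h; simp at h
          have := Finset.card_lt_card (hstrict k hu h0)
          omega
  have hfin : msupp (T^[n-1] y) = Finset.univ := by
    rcases hcard (n-1) with h | h
    · exact h
    · apply Finset.eq_univ_of_card
      have h2 : (msupp (T^[n-1] y)).card ≤ n := by
        simpa using Finset.card_le_univ (msupp (T^[n-1] y))
      have hn : 1 ≤ n := by
        rcases Nat.eq_zero_or_pos n with h0 | h0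
        · exfalso; apply hy0; ext i; exact absurd i.2 (by omega)
        · exact h0
      simp only [Fintype.card_fin]
      omega
  intro i
  have : (T^[n-1] y) i ≠ 0 := by
    have : i ∈ msupp (T^[n-1] y) := hfin ▸ Finset.mem_univ i
    simpa [msupp] using this
  exact lt_of_le_of_ne (hiternn (n-1) i) (Ne.symm this)


lemma PFaux.continuousAt_inf' {α : Type*} [TopologicalSpace α] {ι : Type*} (s : Finset ι)
    (hs : s.Nonempty) (g : ι → α → ℝ) (x : α) (hg : ∀ i, ContinuousAt (g i) x) :
    ContinuousAt (fun y => s.inf' hs (fun i => g i y)) x := by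
  induction hs using Finset.Nonempty.cons_induction with
  | singleton i => simpa using hg i
  | cons i s hi hs ih =>
    have heq : (fun y => (Finset.cons i s hi).inf' (Finset.cons_nonempty hi) (fun j => g j y))
        = fun y => min (g i y) (s.inf' hs fun j => g j y) := by
      ext y; rw [Finset.inf'_cons]
    rw [heq]
    exact (hg i).min ih


lemma PFaux.pow_mulVec_eq_iter (M : Matrix (Fin n) (Fin n) ℝ) (k : ℕ) (x : Fin n → ℝ) :
    ((1 + M) ^ k) *ᵥ x = (fun z => z + M *ᵥ z)^[k] x := by
  induction k with
  | zero => simp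
  | succ k ih =>
    rw [Function.iterate_succ_apply', ← ih]
    show ((1 + M) ^ (k+1)) *ᵥ x = (1 + M) ^ k *ᵥ x + M *ᵥ ((1 + M) ^ k *ᵥ x)
    rw [Matrix.mulVec_mulVec, ← Matrix.add_mulVec, pow_succ']
    congr 1
    rw [add_mul, one_mul]

lemma PFaux.exists_perron (hn : 0 < n) (M : Matrix (Fin n) (Fin n) ℝ) (hM : ∀ i j, 0 ≤ M i j)
    (hirr : ∀ S : Set (Fin n), S.Nonempty → Sᶜ.Nonempty → ∃ j ∈ Sᶜ, ∃ k ∈ S, M j k ≠ 0) :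
    ∃ (r : ℝ) (v : Fin n → ℝ), 0 ≤ r ∧ (∀ i, 0 < v i) ∧ M *ᵥ v = r • v := by
  haveI : Nonempty (Fin n) := ⟨⟨0, hn⟩⟩
  set P : (Fin n → ℝ) → (Fin n → ℝ) := fun x => ((1 + M) ^ (n-1)) *ᵥ x with hPdef
  have hPpos : ∀ x : Fin n → ℝ, (∀ i, 0 ≤ x i) → x ≠ 0 → ∀ i, 0 < P x i := by
    intro x hx hx0 i
    show 0 < (((1 + M) ^ (n-1)) *ᵥ x) i
    rw [PFaux.pow_mulVec_eq_iter]
    exact PFaux.iter_pos M hM hirr x hx hx0 i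
  have hPcont : Continuous P := by
    have : P = ((1 + M) ^ (n-1)).mulVecLin := by ext x i; simp [hPdef]
    rw [this]
    exact LinearMap.continuous_of_finiteDimensional _
  have hPsmul : ∀ (c : ℝ) (x : Fin n → ℝ), P (c • x) = c • P x := by
    intro c x
    show ((1 + M) ^ (n-1)) *ᵥ (c • x) = c • (((1 + M) ^ (n-1)) *ᵥ x)
    exact Matrix.mulVec_smul _ c x
  have hPcomm : ∀ x : Fin n → ℝ, P (M *ᵥ x) = M *ᵥ (P x) := by
    intro x
    show ((1 + M) ^ (n-1)) *ᵥ (M *ᵥ x) = M *ᵥ (((1 + M) ^ (n-1)) *ᵥ x)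
    rw [Matrix.mulVec_mulVec, Matrix.mulVec_mulVec]
    have hc : Commute (1 + M) M := Commute.add_left (Commute.one_left M) (Commute.refl M)
    rw [(hc.pow_left (n-1)).eq]
  -- the compact simplex
  set K : Set (Fin n → ℝ) := {x | (∀ i, 0 ≤ x i) ∧ ∑ i, x i = 1} with hK
  have hKclosed : IsClosed K := by
    have h1 : IsClosed {x : Fin n → ℝ | ∀ i, 0 ≤ x i} := by
      rw [Set.setOf_forall]
      exact isClosed_iInter fun i => isClosed_le continuous_const (continuous_apply i)
    have h2 : IsClosed {x : Fin n → ℝ | ∑ i, x i = 1} :=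
      isClosed_eq (continuous_finset_sum _ fun i _ => continuous_apply i) continuous_const
    exact h1.inter h2
  have hKbdd : Bornology.IsBounded K := by
    apply (Metric.isBounded_closedBall (x := (0 : Fin n → ℝ)) (r := 1)).subset
    intro x hx
    rw [Metric.mem_closedBall, dist_zero_right]
    refine (pi_norm_le_iff_of_nonneg zero_le_one).mpr fun i => ?_
    rw [Real.norm_eq_abs, abs_of_nonneg (hx.1 i), ← hx.2]
    exact Finset.single_le_sum (fun j _ => hx.1 j) (Finset.mem_univ i)
  have hKcompact : IsCompact K := Metric.isCompact_of_isClosed_isBounded hKclosed hKbdd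
  have hKne : K.Nonempty := by
    refine ⟨fun _ => (n : ℝ)⁻¹, fun i => by positivity, ?_⟩
    simp [Finset.sum_const]
    rw [mul_inv_cancel₀ (by exact_mod_cast hn.ne')]
  have hxK0 : ∀ x ∈ K, x ≠ 0 := by
    rintro x ⟨hx1, hx2⟩ rfl
    simp at hx2
  -- the Collatz-Wielandt function
  set f : (Fin n → ℝ) → ℝ :=
    fun x => Finset.univ.inf' Finset.univ_nonempty (fun i => (M *ᵥ P x) i / (P x) i) with hf
  have hfcont : ∀ x ∈ K, ContinuousAt f x := by
    intro x hx
    apply PFaux.continuousAt_inf'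
    intro i
    have hpos : 0 < P x i := hPpos x hx.1 (hxK0 x hx) i
    have h1 : ContinuousAt (fun y => (M *ᵥ P y) i) x :=
      ((continuous_apply i).comp ((M.mulVecLin.continuous_of_finiteDimensional).comp
        hPcont)).continuousAt
    have h2 : ContinuousAt (fun y => (P y) i) x :=
      ((continuous_apply i).comp hPcont).continuousAt
    exact h1.div h2 (ne_of_gt hpos)
  obtain ⟨x0, hx0K, hmax⟩ := hKcompact.exists_isMaxOn hKne
    (fun x hx => (hfcont x hx).continuousWithinAt)
  set r := f x0 with hr
  set v := P x0 with hv
  have hvpos : ∀ i, 0 < v i := hPpos x0 hx0K.1 (hxK0 x0 hx0K)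
  have hMvnn : ∀ i, 0 ≤ (M *ᵥ v) i := by
    intro i
    show 0 ≤ ∑ j, M i j * v j
    exact Finset.sum_nonneg fun j _ => mul_nonneg (hM i j) (hvpos j).le
  have hr0 : 0 ≤ r := by
    rw [hr, hf]
    exact Finset.le_inf' _ _ fun i _ => div_nonneg (hMvnn i) (hvpos i).le
  have hge : ∀ i, r * v i ≤ (M *ᵥ v) i := by
    intro i
    have := Finset.inf'_le (fun i => (M *ᵥ v) i / v i) (Finset.mem_univ i)
    exact (le_div_iff₀ (hvpos i)).mp this
  refine ⟨r, v, hr0, hvpos, ?_⟩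
  by_contra hd
  -- strict improvement
  set d : Fin n → ℝ := M *ᵥ v - r • v with hdd
  have hdnn : ∀ i, 0 ≤ d i := by
    intro i
    have : d i = (M *ᵥ v) i - r * v i := by simp [hdd]
    rw [this]; linarith [hge i]
  have hd0 : d ≠ 0 := fun h => hd (by rwa [hdd, sub_eq_zero] at h)
  have hPd : ∀ i, 0 < P d i := hPpos d hdnn hd0
  set v' := P v with hv'
  have hv'pos : ∀ i, 0 < v' i := hPpos v (fun i => (hvpos i).le) (fun h => (hvpos ⟨0,hn⟩).ne' (congrFun h ⟨0,hn⟩))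
  have hPdeq : P d = M *ᵥ v' - r • v' := by
    rw [hdd]
    have hlin : P (M *ᵥ v - r • v) = P (M *ᵥ v) - P (r • v) := by
      show ((1 + M) ^ (n-1)) *ᵥ _ = _
      rw [Matrix.mulVec_sub]
    rw [hlin, hPcomm, hPsmul]
  have hlt : ∀ i, r * v' i < (M *ᵥ v') i := by
    intro i
    have := hPd i
    rw [hPdeq] at this
    have : 0 < (M *ᵥ v') i - r * v' i := by
      simpa [Pi.sub_apply, Pi.smul_apply, smul_eq_mul] using this
    linarith
  -- normalized improved point
  set c : ℝ := (∑ i, v i)⁻¹ with hc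
  have hsumv : 0 < ∑ i, v i := Finset.sum_pos (fun i _ => hvpos i) Finset.univ_nonempty
  have hcpos : 0 < c := inv_pos.mpr hsumv
  set x' : Fin n → ℝ := c • v with hx'
  have hx'K : x' ∈ K := by
    constructor
    · intro i
      exact mul_nonneg hcpos.le (hvpos i).le
    · rw [hx']
      simp only [Pi.smul_apply, smul_eq_mul, ← Finset.mul_sum]
      exact inv_mul_cancel₀ hsumv.ne'
  have hfx' : r < f x' := by
    rw [hf]
    rw [Finset.lt_inf'_iff]
    intro i _
    have hPx' : P x' = c • v' := by rw [hx', hPsmul]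
    have hnum : (M *ᵥ P x') i = c * (M *ᵥ v') i := by
      rw [hPx', Matrix.mulVec_smul]
      rfl
    have hden : (P x') i = c * v' i := by rw [hPx']; rfl
    rw [hnum, hden, mul_div_mul_left _ _ hcpos.ne']
    exact (lt_div_iff₀ (hv'pos i)).mpr (hlt i)
  exact absurd (hmax hx'K) (not_le.mpr hfx')


lemma PFaux.mem_spectrum_iff (M : Matrix (Fin n) (Fin n) ℂ) (μ : ℂ) :
    μ ∈ spectrum ℂ M ↔ ∃ x, x ≠ 0 ∧ M *ᵥ x = μ • x := by
  rw [spectrum.mem_iff]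
  rw [Matrix.isUnit_iff_isUnit_det, isUnit_iff_ne_zero, not_not,
    ← Matrix.exists_mulVec_eq_zero_iff]
  constructor
  · rintro ⟨x, hx0, hx⟩
    refine ⟨x, hx0, ?_⟩
    have : (algebraMap ℂ (Matrix (Fin n) (Fin n) ℂ)) μ = μ • 1 :=
      Algebra.algebraMap_eq_smul_one μ
    rw [this, Matrix.sub_mulVec, Matrix.smul_mulVec, Matrix.one_mulVec,
      sub_eq_zero] at hx
    exact hx.symm
  · rintro ⟨x, hx0, hx⟩
    refine ⟨x, hx0, ?_⟩
    have : (algebraMap ℂ (Matrix (Fin n) (Fin n) ℂ)) μ = μ • 1 :=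
      Algebra.algebraMap_eq_smul_one μ
    rw [this, Matrix.sub_mulVec, Matrix.smul_mulVec, Matrix.one_mulVec, hx, sub_self]

lemma PFaux.mulVec_ofReal (M : Matrix (Fin n) (Fin n) ℝ) (x : Fin n → ℝ) :
    (M.map (fun r => (r : ℂ))) *ᵥ (fun i => (x i : ℂ)) = fun i => ((M *ᵥ x) i : ℂ) := by
  ext i
  show ∑ j, (M.map (fun r => (r : ℂ))) i j * (x j : ℂ) = ((∑ j, M i j * x j : ℝ) : ℂ)
  push_cast
  simp [Matrix.map_apply]

lemma PFaux.charpoly_sub_smul_one (M : Matrix (Fin n) (Fin n) ℂ) (t : ℂ) :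
    (M - t • 1).charpoly = M.charpoly.comp (X + C t) := by
  rw [Polynomial.comp_eq_aeval]
  rw [Matrix.charpoly, Matrix.charpoly]
  rw [show (aeval (X + C t) : ℂ[X] →ₐ[ℂ] ℂ[X]) ((charmatrix M).det)
      = ((aeval (X + C t)).toRingHom : ℂ[X] →+* ℂ[X]) ((charmatrix M).det) from rfl]
  rw [RingHom.map_det]
  congr 1
  rw [RingHom.mapMatrix_apply]
  apply Matrix.ext
  intro i j
  by_cases hij : i = j
  · subst hij
    simp only [Matrix.map_apply, charmatrix_apply_eq, RingHom.coe_coe, map_sub, aeval_X, aeval_C]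
    have : (M - t • 1) i i = M i i - t := by simp [Matrix.sub_apply, Matrix.one_apply]
    rw [this]
    simp only [AlgHom.toRingHom_eq_coe, RingHom.coe_coe, map_sub, aeval_X, aeval_C,
      Polynomial.algebraMap_eq]
    ring
  · rw [Matrix.map_apply, charmatrix_apply_ne _ _ _ hij, charmatrix_apply_ne _ _ _ hij]
    have : (M - t • 1) i j = M i j := by simp [Matrix.sub_apply, Matrix.one_apply_ne hij]
    rw [this]
    simp [Polynomial.algebraMap_eq]

lemma PFaux.rootMultiplicity_eq_finrank (M : Matrix (Fin n) (Fin n) ℂ) (t : ℂ) :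
    M.charpoly.rootMultiplicity t
      = Module.finrank ℂ (Module.End.maxGenEigenspace (Matrix.toLin' (M - t • 1)) 0) := by
  rw [Polynomial.rootMultiplicity_eq_natTrailingDegree, ← PFaux.charpoly_sub_smul_one]
  rw [LinearMap.finrank_maxGenEigenspace_zero_eq]
  congr 1
  have := LinearMap.charpoly_toMatrix (Matrix.toLin' (M - t • 1)) (Pi.basisFun ℂ (Fin n))
  rw [← this, LinearMap.toMatrix_eq_toMatrix', LinearMap.toMatrix'_toLin']

end PFauxiliary

/-- If `A` is an irreducible real `n×n` matrix with nonnegative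
off-diagonal entries, then the spectral bound `s(A)` is an eigenvalue of algebraic
multiplicity one, and every other eigenvalue `λ` satisfies `Re λ < s(A)`. -/
theorem spectral_bound_simple_dominant (n : ℕ) (hn : 0 < n)
    (A : Matrix (Fin n) (Fin n) ℝ)
    (hoff : ∀ i j, i ≠ j → 0 ≤ A i j)
    (hirr : MatIrreducible A)
    (s : ℝ)
    (hs : IsGreatest {x : ℝ | ∃ μ ∈ spectrum ℂ (A.map (fun r => (r : ℂ))), x = μ.re} s) :
    (s : ℂ) ∈ spectrum ℂ (A.map (fun r => (r : ℂ))) ∧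
    (A.map (fun r => (r : ℂ))).charpoly.rootMultiplicity (s : ℂ) = 1 ∧
    ∀ μ ∈ spectrum ℂ (A.map (fun r => (r : ℂ))), μ ≠ (s : ℂ) → μ.re < s := by
  classical
  haveI : Nonempty (Fin n) := ⟨⟨0, hn⟩⟩
  set Aℂ := A.map (fun r => (r : ℂ)) with hAC
  set c : ℝ := ∑ i, |A i i| with hc
  set B : Matrix (Fin n) (Fin n) ℝ := A + c • 1 with hB
  have hBd : ∀ i j, i ≠ j → B i j = A i j := by
    intro i j hij; simp [hB, Matrix.one_apply_ne hij]
  have hcd : ∀ i, |A i i| ≤ c :=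
    fun i => Finset.single_le_sum (fun j _ => abs_nonneg (A j j)) (Finset.mem_univ i)
  have hBnn : ∀ i j, 0 ≤ B i j := by
    intro i j
    by_cases hij : i = j
    · subst hij
      have h1 : B i i = A i i + c := by simp [hB, Matrix.one_apply]
      rw [h1]
      have := hcd i
      have := neg_abs_le (A i i)
      linarith
    · rw [hBd i j hij]; exact hoff i j hij
  have hirr' : ∀ S : Set (Fin n), S.Nonempty → Sᶜ.Nonempty →
      ∃ i ∈ S, ∃ j, j ∉ S ∧ A i j ≠ 0 := by
    intro S hS hSc
    by_contra hcon
    push_neg at hcon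
    exact hirr ⟨S, hS, hSc, fun i hi j hj => hcon i hi j hj⟩
  have hirrB : ∀ S : Set (Fin n), S.Nonempty → Sᶜ.Nonempty →
      ∃ j ∈ Sᶜ, ∃ k ∈ S, B j k ≠ 0 := by
    intro S hS hSc
    obtain ⟨i, hi, j, hj, hA⟩ := hirr' Sᶜ hSc (by rwa [compl_compl])
    have hjS : j ∈ S := by simpa using hj
    have hij : i ≠ j := by rintro rfl; exact hj hi
    exact ⟨i, hi, j, hjS, by rw [hBd i j hij]; exact hA⟩
  have hirrBT : ∀ S : Set (Fin n), S.Nonempty → Sᶜ.Nonempty →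
      ∃ j ∈ Sᶜ, ∃ k ∈ S, Bᵀ j k ≠ 0 := by
    intro S hS hSc
    obtain ⟨i, hi, j, hj, hA⟩ := hirr' S hS hSc
    have hij : i ≠ j := by rintro rfl; exact hj hi
    exact ⟨j, hj, i, hi, by rw [Matrix.transpose_apply, hBd i j hij]; exact hA⟩
  obtain ⟨r, v, hr0, hv, hBv⟩ := PFaux.exists_perron hn B hBnn hirrB
  obtain ⟨r', w, hr'0, hw, hBTw⟩ :=
    PFaux.exists_perron hn Bᵀ (fun i j => hBnn j i) hirrBT
  -- dot product basics
  have hwv : 0 < w ⬝ᵥ v :=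
    Finset.sum_pos (fun i _ => mul_pos (hw i) (hv i)) Finset.univ_nonempty
  have hrr' : r' = r := by
    have h1 : w ⬝ᵥ (B *ᵥ v) = r * (w ⬝ᵥ v) := by
      rw [hBv, dotProduct_smul]; rfl
    have h2 : w ⬝ᵥ (B *ᵥ v) = r' * (w ⬝ᵥ v) := by
      rw [Matrix.dotProduct_mulVec, ← Matrix.mulVec_transpose, hBTw, smul_dotProduct]; rfl
    exact mul_right_cancel₀ hwv.ne' (h2.symm.trans h1)
  rw [hrr'] at hBTw
  -- complexified matrices and vectors
  set Bℂ := B.map (fun x => (x : ℂ)) with hBC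
  have hBCA : Bℂ = Aℂ + (c : ℂ) • 1 := by
    apply Matrix.ext
    intro i j
    by_cases hij : i = j
    · subst hij
      simp [hBC, hB, hAC, Matrix.map_apply, Matrix.one_apply]
    · simp [hBC, hB, hAC, Matrix.map_apply, Matrix.one_apply_ne hij]
  have heigshift : ∀ (μ : ℂ) (x : Fin n → ℂ), Aℂ *ᵥ x = μ • x ↔ Bℂ *ᵥ x = (μ + c) • x := by
    intro μ x
    rw [hBCA, Matrix.add_mulVec, Matrix.smul_mulVec, Matrix.one_mulVec, add_smul]
    constructor
    · intro h; rw [h]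
    · intro h; exact add_right_cancel h
  set vℂ : Fin n → ℂ := fun i => (v i : ℂ) with hvC
  have hvC0 : vℂ ≠ 0 := by
    intro h
    have := congrFun h ⟨0, hn⟩
    simp only [hvC, Pi.zero_apply, Complex.ofReal_eq_zero] at this
    exact (hv ⟨0, hn⟩).ne' this
  have hBCv : Bℂ *ᵥ vℂ = ((r : ℂ)) • vℂ := by
    rw [hvC, PFaux.mulVec_ofReal]
    ext i
    rw [hBv]
    simp [Complex.ofReal_mul]
  have hACv : Aℂ *ᵥ vℂ = ((r - c : ℝ) : ℂ) • vℂ := by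
    rw [heigshift]
    push_cast
    simpa using hBCv
  have hsmem : (((r - c : ℝ)) : ℂ) ∈ spectrum ℂ Aℂ :=
    (PFaux.mem_spectrum_iff Aℂ _).mpr ⟨vℂ, hvC0, hACv⟩
  -- modulus bound
  have hbound : ∀ μ : ℂ, μ ∈ spectrum ℂ Aℂ → ‖μ + c‖ ≤ r := by
    intro μ hμ
    obtain ⟨x, hx0, hx⟩ := (PFaux.mem_spectrum_iff Aℂ μ).mp hμ
    rw [heigshift] at hx
    set y : Fin n → ℝ := fun i => ‖x i‖ with hy
    have hynn : ∀ i, 0 ≤ y i := fun i => norm_nonneg _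
    have hkey : ∀ i, ‖μ + c‖ * y i ≤ (B *ᵥ y) i := by
      intro i
      have h1 : ‖μ + c‖ * y i = ‖(μ + c) * x i‖ := by
        rw [norm_mul]
      have h2 : (μ + c) * x i = (Bℂ *ᵥ x) i := by
        rw [hx]; rfl
      have h3 : ‖(Bℂ *ᵥ x) i‖ ≤ (B *ᵥ y) i := by
        show ‖∑ j, Bℂ i j * x j‖ ≤ ∑ j, B i j * y j
        refine (norm_sum_le _ _ ).trans ?_
        apply le_of_eq
        apply Finset.sum_congr rfl
        intro j _
        rw [norm_mul]
        simp [hBC, Matrix.map_apply, Complex.norm_real, abs_of_nonneg (hBnn i j), hy]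
      rw [h1, h2]; exact h3
    have hwy : 0 ≤ w ⬝ᵥ y :=
      Finset.sum_nonneg fun i _ => mul_nonneg (hw i).le (hynn i)
    have hwypos : 0 < w ⬝ᵥ y := by
      obtain ⟨i0, hi0⟩ := Function.ne_iff.mp hx0
      apply Finset.sum_pos' (fun i _ => mul_nonneg (hw i).le (hynn i))
      refine ⟨i0, Finset.mem_univ i0, mul_pos (hw i0) ?_⟩
      simpa [hy] using (norm_pos_iff.mpr hi0)
    have hdot : ‖μ + c‖ * (w ⬝ᵥ y) ≤ r * (w ⬝ᵥ y) := by
      have h4 : ‖μ + c‖ * (w ⬝ᵥ y) ≤ w ⬝ᵥ (B *ᵥ y) := by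
        rw [dotProduct, Finset.mul_sum]
        apply Finset.sum_le_sum
        intro i _
        calc ‖μ + c‖ * (w i * y i)
            = w i * (‖μ + c‖ * y i) := by ring
          _ ≤ w i * (B *ᵥ y) i := by
              exact mul_le_mul_of_nonneg_left (hkey i) (hw i).le
      have h5 : w ⬝ᵥ (B *ᵥ y) = r * (w ⬝ᵥ y) := by
        rw [Matrix.dotProduct_mulVec, ← Matrix.mulVec_transpose, hBTw, smul_dotProduct]; rfl
      linarith
    exact le_of_mul_le_mul_right (by linarith) hwypos
  -- s = r - c
  have hsrc : s = r - c := by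
    apply hs.unique
    constructor
    · exact ⟨((r - c : ℝ) : ℂ), hsmem, by simp⟩
    · rintro x ⟨μ, hμ, rfl⟩
      have h1 : (μ + c).re ≤ ‖μ + c‖ := Complex.re_le_norm _
      have h2 := hbound μ hμ
      have h3 : (μ + c).re = μ.re + c := by simp
      linarith
  refine ⟨?_, ?_, ?_⟩
  · rw [hsrc]; exact_mod_cast hsmem
  · -- multiplicity one
    set wℂ : Fin n → ℂ := fun i => (w i : ℂ) with hwC
    -- real geometric simplicity
    have hsimple : ∀ x : Fin n → ℝ, B *ᵥ x = r • x → ∃ t : ℝ, x = t • v := by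
      intro x hx
      set t := Finset.univ.inf' Finset.univ_nonempty (fun i => x i / v i) with ht
      refine ⟨t, ?_⟩
      set y : Fin n → ℝ := x - t • v with hy
      have hynn : ∀ i, 0 ≤ y i := by
        intro i
        have h1 : t ≤ x i / v i := Finset.inf'_le _ (Finset.mem_univ i)
        have h2 : t * v i ≤ x i := (le_div_iff₀ (hv i)).mp h1
        simp only [hy, Pi.sub_apply, Pi.smul_apply, smul_eq_mul]
        linarith
      obtain ⟨i0, -, hi0⟩ :=
        Finset.exists_mem_eq_inf' (Finset.univ_nonempty) (fun i => x i / v i)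
      have hyi0 : y i0 = 0 := by
        simp only [hy, Pi.sub_apply, Pi.smul_apply, smul_eq_mul, ht, hi0]
        rw [div_mul_cancel₀ _ (hv i0).ne']
        ring
      have hBy : B *ᵥ y = r • y := by
        ext i
        simp only [hy, Matrix.mulVec_sub, hx, Matrix.mulVec_smul, hBv, Pi.sub_apply,
          Pi.smul_apply, smul_eq_mul]
        ring
      by_cases hy0 : y = 0
      · have : x - t • v = 0 := by rw [← hy]; exact hy0
        rw [sub_eq_zero] at this
        exact this
      · exfalso
        have hpos := PFaux.iter_pos B hBnn hirrB y hynn hy0 i0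
        have hiter : ∀ k, (fun z => z + B *ᵥ z)^[k] y = (1+r)^k • y := by
          intro k
          induction k with
          | zero => simp
          | succ k ih =>
            rw [Function.iterate_succ_apply', ih]
            ext i
            show ((1+r)^k • y) i + (B *ᵥ ((1+r)^k • y)) i = ((1+r)^(k+1) • y) i
            rw [Matrix.mulVec_smul, hBy]
            simp only [Pi.smul_apply, smul_eq_mul]
            ring
        rw [hiter (n-1)] at hpos
        simp only [Pi.smul_apply, smul_eq_mul, hyi0, mul_zero] at hpos
        exact lt_irrefl 0 hpos
    -- complex kernel of Aℂ - s
    have hker : ∀ z : Fin n → ℂ, Aℂ *ᵥ z = ((s : ℝ) : ℂ) • z → ∃ a : ℂ, z = a • vℂ := by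
      intro z hz
      have hzB : Bℂ *ᵥ z = ((r : ℝ) : ℂ) • z := by
        rw [heigshift] at hz
        rw [hz]
        congr 1
        rw [hsrc]
        push_cast
        ring
      have hpart : ∀ u : Fin n → ℝ, (∀ i, ((Bℂ *ᵥ z) i).re * 0 = 0) → True := fun _ _ => trivial
      have hre : B *ᵥ (fun i => (z i).re) = r • (fun i => (z i).re) := by
        ext i
        have h1 := congrArg Complex.re (congrFun hzB i)
        have h2 : ((Bℂ *ᵥ z) i).re = ∑ j, B i j * (z j).re := by
          show (∑ j, Bℂ i j * z j).re = _
          rw [Complex.re_sum]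
          apply Finset.sum_congr rfl
          intro j _
          simp [hBC, Matrix.map_apply, Complex.mul_re]
        have h3 : ((((r : ℝ) : ℂ) • z) i).re = r * (z i).re := by
          simp [Complex.mul_re]
        rw [h2, h3] at h1
        simp only [Pi.smul_apply, smul_eq_mul]; exact h1
      have him : B *ᵥ (fun i => (z i).im) = r • (fun i => (z i).im) := by
        ext i
        have h1 := congrArg Complex.im (congrFun hzB i)
        have h2 : ((Bℂ *ᵥ z) i).im = ∑ j, B i j * (z j).im := by
          show (∑ j, Bℂ i j * z j).im = _
          rw [Complex.im_sum]
          apply Finset.sum_congr rfl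
          intro j _
          simp [hBC, Matrix.map_apply, Complex.mul_im]
        have h3 : ((((r : ℝ) : ℂ) • z) i).im = r * (z i).im := by
          simp [Complex.mul_im]
        rw [h2, h3] at h1
        simp only [Pi.smul_apply, smul_eq_mul]; exact h1
      obtain ⟨a, ha⟩ := hsimple _ hre
      obtain ⟨b, hb⟩ := hsimple _ him
      refine ⟨(a : ℂ) + (b : ℂ) * Complex.I, ?_⟩
      ext i
      have haa : (z i).re = a * v i := by
        have := congrFun ha i
        simpa using this
      have hbb : (z i).im = b * v i := by
        have := congrFun hb i
        simpa using this
      rw [← Complex.re_add_im (z i), haa, hbb]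
      show _ = ((a : ℂ) + (b : ℂ) * Complex.I) * vℂ i
      rw [hvC]
      push_cast
      ring
    -- left eigenvector orthogonality
    have hATreal : Aᵀ *ᵥ w = s • w := by
      have h1 : Bᵀ = Aᵀ + c • 1 := by
        rw [hB, Matrix.transpose_add, Matrix.transpose_smul, Matrix.transpose_one]
      rw [h1, Matrix.add_mulVec, Matrix.smul_mulVec, Matrix.one_mulVec] at hBTw
      have h2 : Aᵀ *ᵥ w = r • w - c • w := by
        rw [← hBTw]; abel
      rw [h2, hsrc, sub_smul]
    have hATwC : Aℂᵀ *ᵥ wℂ = ((s : ℝ) : ℂ) • wℂ := by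
      have h1 : Aℂᵀ = (Aᵀ).map (fun x => (x : ℂ)) := by
        rw [hAC]
        exact (Matrix.transpose_map).symm ▸ rfl
      rw [h1, hwC, PFaux.mulVec_ofReal, hATreal]
      ext i
      simp
    have hwvC : wℂ ⬝ᵥ vℂ ≠ 0 := by
      have : wℂ ⬝ᵥ vℂ = ((w ⬝ᵥ v : ℝ) : ℂ) := by
        rw [hwC, hvC]
        show ∑ i, (w i : ℂ) * (v i : ℂ) = ((∑ i, w i * v i : ℝ) : ℂ)
        push_cast
        rfl
      rw [this]
      exact_mod_cast hwv.ne'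
    -- compute multiplicity via generalized eigenspace
    rw [PFaux.rootMultiplicity_eq_finrank]
    set ψ := Matrix.toLin' (Aℂ - ((s : ℝ) : ℂ) • 1) with hψ
    have hψapp : ∀ z : Fin n → ℂ, ψ z = (Aℂ - ((s : ℝ) : ℂ) • 1) *ᵥ z :=
      fun z => Matrix.toLin'_apply _ z
    have hψv : ψ vℂ = 0 := by
      rw [hψapp, Matrix.sub_mulVec, Matrix.smul_mulVec, Matrix.one_mulVec, hACv, ← hsrc]
      exact sub_self _
    have hψker : ∀ z : Fin n → ℂ, ψ z = 0 → ∃ a : ℂ, z = a • vℂ := by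
      intro z hz
      apply hker
      rw [hψapp, Matrix.sub_mulVec, Matrix.smul_mulVec, Matrix.one_mulVec,
        sub_eq_zero] at hz
      exact hz
    have hψorth : ∀ z : Fin n → ℂ, wℂ ⬝ᵥ (ψ z) = 0 := by
      intro z
      rw [hψapp, Matrix.dotProduct_mulVec, ← Matrix.mulVec_transpose]
      have h1 : (Aℂ - ((s : ℝ) : ℂ) • 1)ᵀ *ᵥ wℂ = 0 := by
        rw [Matrix.transpose_sub, Matrix.transpose_smul, Matrix.transpose_one,
          Matrix.sub_mulVec, Matrix.smul_mulVec, Matrix.one_mulVec, hATwC, sub_self]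
      rw [h1, zero_dotProduct]
    have hkerpow : ∀ k, ∀ z : Fin n → ℂ, (ψ ^ k) z = 0 → z ∈ Submodule.span ℂ {vℂ} := by
      intro k
      induction k with
      | zero =>
        intro z hz
        simp only [pow_zero, Module.End.one_apply] at hz
        rw [hz]
        exact Submodule.zero_mem _
      | succ k ih =>
        intro z hz
        have hk' : (ψ ^ k) (ψ z) = 0 := by
          rw [← Module.End.mul_apply, ← pow_succ]
          exact hz
        obtain ⟨a, ha⟩ := Submodule.mem_span_singleton.mp (ih _ hk')
        have hdot := hψorth z
        rw [← ha] at hdot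
        have : a * (wℂ ⬝ᵥ vℂ) = 0 := by
          rw [← hdot]
          show a * (∑ i, wℂ i * vℂ i) = ∑ i, wℂ i * (a • vℂ) i
          rw [Finset.mul_sum]
          apply Finset.sum_congr rfl
          intro i _
          show a * (wℂ i * vℂ i) = wℂ i * (a * vℂ i)
          ring
        have ha0 : a = 0 := by
          rcases mul_eq_zero.mp this with h | h
          · exact h
          · exact absurd h hwvC
        have hψz0 : ψ z = 0 := by rw [← ha, ha0, zero_smul]
        obtain ⟨a', ha'⟩ := hψker z hψz0
        rw [ha']
        exact Submodule.smul_mem _ _ (Submodule.mem_span_singleton_self _)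
    have hspan : Module.End.maxGenEigenspace ψ 0 = Submodule.span ℂ {vℂ} := by
      apply le_antisymm
      · intro z hz
        rw [Module.End.mem_maxGenEigenspace] at hz
        obtain ⟨k, hk⟩ := hz
        simp only [zero_smul, sub_zero] at hk
        exact hkerpow k z hk
      · rw [Submodule.span_le, Set.singleton_subset_iff, SetLike.mem_coe,
          Module.End.mem_maxGenEigenspace]
        exact ⟨1, by simpa [pow_one] using hψv⟩
    rw [hspan]
    exact finrank_span_singleton hvC0
  · intro μ hμ hne
    have hle : μ.re ≤ s := hs.2 ⟨μ, hμ, rfl⟩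
    rcases lt_or_eq_of_le hle with h | h
    · exact h
    · exfalso
      have h2 := hbound μ hμ
      have h3 : (μ + c).re = r := by simp [h, hsrc]
      have h4 : ‖μ + c‖ = (μ + c).re := by
        have := Complex.re_le_norm (μ + c)
        rw [h3] at this ⊢
        linarith
      have him : (μ + c).im = 0 := by
        have hsq := Complex.sq_norm (μ + c)
        rw [h4] at hsq
        rw [Complex.normSq_apply] at hsq
        nlinarith [sq_nonneg ((μ + c).im)]
      have hμeq : μ = (s : ℂ) := by
        have : μ + c = ((r : ℝ) : ℂ) := by
          apply Complex.ext
          · simp [h3]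
          · simp [him]
        have h6 : μ = (r : ℂ) - (c : ℂ) := by
          rw [← this]; ring
        rw [h6, hsrc]
        push_cast
        ring
      exact hne hμeq
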